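/- Let p : ℝ → ℝ be defined by p(ζ) = ζ (1 − Σ_{k=a}^{b} c_k ζᵏ) with 1 ≤ a ≤ b, all coefficients c_k > 0. Then the derivative p'(ζ) has exactly one zero in (0, ∞). -/

import Mathlib

/-- For `p(ζ) = ζ (1 − Σ_{k=a}^{b} c_k ζᵏ)` with `1 ≤ a ≤ b` and all `c_k > 0`,
the derivative `p'` has exactly one zero in `(0, ∞)`. -/
theorem deriv_has_unique_positive_zero
    (a b : ℕ) (ha : 1 ≤ a) (hab : a ≤ b) (c : ℕ → ℝ)
    (hc : ∀ k ∈ Finset.Icc a b, 0 < c k)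
    (p : ℝ → ℝ) (hp : p = fun ζ => ζ * (1 - ∑ k ∈ Finset.Icc a b, c k * ζ ^ k)) :
    ∃! ζ : ℝ, 0 < ζ ∧ deriv p ζ = 0 := by
  -- rewrite p as ζ - Σ c_k ζ^(k+1)
  have hp' : p = fun ζ => ζ - ∑ k ∈ Finset.Icc a b, c k * ζ ^ (k + 1) := by
    rw [hp]; funext ζ
    rw [mul_sub, mul_one, Finset.mul_sum]
    congr 1
    apply Finset.sum_congr rfl
    intro k _
    ring
  set f : ℝ → ℝ := fun ζ => ∑ k ∈ Finset.Icc a b, c k * (((k : ℝ) + 1) * ζ ^ k) with hf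
  have hd : ∀ ζ : ℝ, HasDerivAt p (1 - f ζ) ζ := by
    intro ζ
    rw [hp']
    have h1 : HasDerivAt (fun ζ : ℝ => ∑ k ∈ Finset.Icc a b, c k * ζ ^ (k + 1)) (f ζ) ζ := by
      apply HasDerivAt.fun_sum
      intro k _
      have := (hasDerivAt_pow (k + 1) ζ).const_mul (c k)
      simpa using this
    simpa using (hasDerivAt_id' ζ).fun_sub h1
  have hderiv : ∀ ζ : ℝ, deriv p ζ = 1 - f ζ := fun ζ => (hd ζ).deriv
  -- strict monotonicity of f on [0, ∞)
  have hmono : ∀ x y : ℝ, 0 ≤ x → x < y → f x < f y := by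
    intro x y hx hxy
    apply Finset.sum_lt_sum_of_nonempty (Finset.nonempty_Icc.2 hab)
    intro k hk
    have hk1 : k ≠ 0 := by have := (Finset.mem_Icc.1 hk).1; omega
    have hpow : x ^ k < y ^ k := pow_lt_pow_left₀ hxy hx hk1
    have hck := hc k hk
    have hk0 : (0:ℝ) < (k : ℝ) + 1 := by positivity
    exact mul_lt_mul_of_pos_left (mul_lt_mul_of_pos_left hpow hk0) hck
  have hf0 : f 0 = 0 := by
    apply Finset.sum_eq_zero
    intro k hk
    have hk1 : k ≠ 0 := by have := (Finset.mem_Icc.1 hk).1; omega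
    rw [zero_pow hk1]; ring
  -- a point where f is at least 1
  have hca := hc a (Finset.mem_Icc.2 ⟨le_refl a, hab⟩)
  set A : ℝ := c a * ((a : ℝ) + 1) with hA
  have hApos : 0 < A := by positivity
  set x : ℝ := max 1 A⁻¹ with hxdef
  have hx1 : (1:ℝ) ≤ x := le_max_left _ _
  have hx0 : (0:ℝ) ≤ x := by linarith
  have hfx : 1 ≤ f x := by
    have hterm : A * x ^ a ≤ f x := by
      have hnn : ∀ k ∈ Finset.Icc a b, 0 ≤ c k * (((k : ℝ) + 1) * x ^ k) := by
        intro k hk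
        have hck := hc k hk
        positivity
      have := Finset.single_le_sum hnn (Finset.mem_Icc.2 ⟨le_refl a, hab⟩)
      calc A * x ^ a = c a * (((a : ℝ) + 1) * x ^ a) := by ring
        _ ≤ f x := this
    have hxa : x ≤ x ^ a := by
      calc x = x ^ 1 := (pow_one x).symm
        _ ≤ x ^ a := pow_le_pow_right₀ hx1 ha
    have hAx : 1 ≤ A * x := by
      have h1 : A⁻¹ ≤ x := le_max_right _ _
      have := mul_le_mul_of_nonneg_left h1 hApos.le
      rwa [mul_inv_cancel₀ hApos.ne'] at this
    nlinarith
  -- IVT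
  have hcont : Continuous f := by
    apply continuous_finset_sum
    intro k _
    exact continuous_const.mul (continuous_const.mul (continuous_pow k))
  have hsub := intermediate_value_Ioc hx0 hcont.continuousOn
  have h1mem : (1:ℝ) ∈ Set.Ioc (f 0) (f x) := by
    rw [hf0]; exact ⟨one_pos, hfx⟩
  obtain ⟨ζ, hζmem, hfζ⟩ := hsub h1mem
  refine ⟨ζ, ⟨hζmem.1, ?_⟩, ?_⟩
  · rw [hderiv, hfζ]; ring
  · rintro y ⟨hy, hdy⟩
    rw [hderiv] at hdy
    have hfy : f y = 1 := by linarith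
    rcases lt_trichotomy y ζ with h | h | h
    · have := hmono y ζ hy.le h
      rw [hfy, hfζ] at this; linarith
    · exact h
    · have := hmono ζ y hζmem.1.le h
      rw [hfy, hfζ] at this; linarith
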